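/- Let p be a probability distribution on the finite set Fin k, let X_1, ..., X_n be independent samples drawn from p, and let p̂ be the empirical distribution (p̂_j = (1/n)·#{i : X_i = j}). Then for every ε > 0, the probability that ‖p̂ − p‖₁ ≥ ε is at most 2^k · exp(−n·ε²/2). -/

import Mathlib

open MeasureTheory ProbabilityTheory

open Real
open scoped ENNReal

lemma bernoulli_mgf_bound {q : ℝ} (hq0 : 0 ≤ q) (hq1 : q ≤ 1) (t : ℝ) :
    q * exp (t * (1 - q)) + (1 - q) * exp (t * (-q)) ≤ exp (t ^ 2 / 8) := by
  set D : ℝ → ℝ := fun t => 1 - q + q * exp t with hD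
  have hDpos : ∀ s : ℝ, 0 < D s := by
    intro s
    rcases eq_or_lt_of_le hq0 with h | h
    · simp [hD, ← h]
    · have h2 : 0 < q * exp s := mul_pos h (exp_pos s)
      have h3 : 0 ≤ 1 - q := by linarith
      simp only [hD]; linarith
  -- F t = t*q + t^2/8 - log (D t); show 0 ≤ F t
  set F : ℝ → ℝ := fun t => t * q + t ^ 2 / 8 - log (D t) with hF
  set F' : ℝ → ℝ := fun t => q + t / 4 - q * exp t / D t with hF'
  have hderivF : ∀ s : ℝ, HasDerivAt F (F' s) s := by
    intro s
    have h1 : HasDerivAt D (q * exp s) s := by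
      exact ((hasDerivAt_exp s).const_mul q).const_add (1 - q)
    have h2 : HasDerivAt (fun u => log (D u)) (q * exp s / D s) s :=
      h1.log (hDpos s).ne'
    have h3 : HasDerivAt (fun u : ℝ => u * q + u ^ 2 / 8) (q + s / 4) s := by
      have : HasDerivAt (fun u : ℝ => u * q) q s := by
        simpa using (hasDerivAt_id s).mul_const q
      have h4 : HasDerivAt (fun u : ℝ => u ^ 2 / 8) (s / 4) s := by
        have := (hasDerivAt_pow 2 s).div_const 8
        simpa [mul_comm] using this.congr_deriv (by ring)
      exact this.add h4
    exact h3.sub h2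
  have hderivF' : ∀ s : ℝ, HasDerivAt F' (1 / 4 - q * exp s * (1 - q) / (D s) ^ 2) s := by
    intro s
    have h1 : HasDerivAt D (q * exp s) s := by
      exact ((hasDerivAt_exp s).const_mul q).const_add (1 - q)
    have h2 : HasDerivAt (fun u => q * exp u) (q * exp s) s :=
      (hasDerivAt_exp s).const_mul q
    have h3 : HasDerivAt (fun u => q * exp u / D u)
        ((q * exp s * D s - q * exp s * (q * exp s)) / (D s) ^ 2) s :=
      h2.div h1 (hDpos s).ne'
    have h4 : HasDerivAt (fun u : ℝ => q + u / 4) (1 / 4) s := by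
      simpa using ((hasDerivAt_id s).div_const 4).const_add q
    have := h4.sub h3
    refine this.congr_deriv ?_
    have : D s = 1 - q + q * exp s := rfl
    rw [this]
    ring
  have hF''nonneg : ∀ s : ℝ, 0 ≤ 1 / 4 - q * exp s * (1 - q) / (D s) ^ 2 := by
    intro s
    have hab : q * exp s * (1 - q) ≤ (D s) ^ 2 / 4 := by
      have h := sq_nonneg (q * exp s - (1 - q))
      have : D s = 1 - q + q * exp s := rfl
      nlinarith [hDpos s]
    have h2 : (0:ℝ) < (D s) ^ 2 := pow_pos (hDpos s) 2
    rw [sub_nonneg, div_le_iff₀ h2]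
    linarith
  have hmonoF' : Monotone F' := by
    apply monotone_of_deriv_nonneg
    · exact fun s => (hderivF' s).differentiableAt
    · intro s
      rw [(hderivF' s).deriv]
      exact hF''nonneg s
  have hF'0 : F' 0 = 0 := by
    simp [hF', hD]
  have hFnonneg : ∀ s : ℝ, 0 ≤ F s := by
    have hF0 : F 0 = 0 := by simp [hF, hD]
    intro s
    rcases le_total 0 s with hs | hs
    · have : MonotoneOn F (Set.Ici 0) := by
        apply monotoneOn_of_deriv_nonneg (convex_Ici 0)
          (fun u _ => (hderivF u).differentiableAt.continuousAt.continuousWithinAt)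
          (fun u _ => (hderivF u).differentiableAt.differentiableWithinAt)
        intro u hu
        rw [(hderivF u).deriv]
        rw [interior_Ici] at hu
        calc (0:ℝ) = F' 0 := hF'0.symm
          _ ≤ F' u := hmonoF' (le_of_lt hu)
      have := this (Set.self_mem_Ici) (Set.mem_Ici.mpr hs) hs
      rwa [hF0] at this
    · have : AntitoneOn F (Set.Iic 0) := by
        apply antitoneOn_of_deriv_nonpos (convex_Iic 0)
          (fun u _ => (hderivF u).differentiableAt.continuousAt.continuousWithinAt)
          (fun u _ => (hderivF u).differentiableAt.differentiableWithinAt)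
        intro u hu
        rw [(hderivF u).deriv]
        rw [interior_Iic] at hu
        calc F' u ≤ F' 0 := hmonoF' (le_of_lt hu)
          _ = 0 := hF'0
      have := this (Set.mem_Iic.mpr hs) (Set.self_mem_Iic) hs
      rwa [hF0] at this
  -- conclude
  have key : log (D t) ≤ t * q + t ^ 2 / 8 := by
    have := hFnonneg t
    simp only [hF] at this
    linarith
  have hDle : D t ≤ exp (t * q + t ^ 2 / 8) := by
    rw [← exp_log (hDpos t)]
    exact exp_le_exp.mpr key
  have := mul_le_mul_of_nonneg_left hDle (exp_pos (-(t * q))).le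
  calc q * exp (t * (1 - q)) + (1 - q) * exp (t * (-q))
      = exp (-(t * q)) * D t := by
        have e1 : exp (t * (1 - q)) = exp (-(t * q)) * exp t := by
          rw [← exp_add]; ring_nf
        have e2 : exp (t * (-q)) = exp (-(t * q)) := by ring_nf
        simp only [hD]; rw [e1, e2]; ring
    _ ≤ exp (-(t * q)) * exp (t * q + t ^ 2 / 8) := this
    _ = exp (t ^ 2 / 8) := by rw [← exp_add]; ring_nf

/-- Per-subset Chernoff bound. -/
lemma subset_chernoff
    {Ω : Type*} [MeasurableSpace Ω] (μ : Measure Ω) [IsProbabilityMeasure μ]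
    (k n : ℕ) (p : Fin k → ℝ) (hp0 : ∀ j, 0 ≤ p j) (hp1 : ∑ j, p j = 1)
    (X : Fin n → Ω → Fin k) (hXmeas : ∀ i, Measurable (X i))
    (hindep : iIndepFun X μ)
    (hlaw : ∀ i j, (μ {ω | X i ω = j}).toReal = p j)
    (ε : ℝ) (hε : 0 < ε) (S : Finset (Fin k)) :
    (μ {ω | (n : ℝ) * ε / 2
        ≤ ∑ i, ((if X i ω ∈ S then (1:ℝ) else 0) - ∑ j ∈ S, p j)}).toReal
      ≤ Real.exp (-(n : ℝ) * ε ^ 2 / 2) := by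
  classical
  set q : ℝ := ∑ j ∈ S, p j with hq
  have hq0 : 0 ≤ q := Finset.sum_nonneg fun j _ => hp0 j
  have hq1 : q ≤ 1 := by
    rw [← hp1]
    exact Finset.sum_le_sum_of_subset_of_nonneg (Finset.subset_univ S)
      (fun j _ _ => hp0 j)
  set Z : Fin n → Ω → ℝ := fun i ω => (if X i ω ∈ S then (1:ℝ) else 0) - q with hZ
  have hZmeas : ∀ i, Measurable (Z i) := by
    intro i
    apply Measurable.sub _ measurable_const
    exact Measurable.ite ((hXmeas i) (measurableSet_preimage measurable_id
      (Finset.measurableSet S))) measurable_const measurable_const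
  have hZindep : iIndepFun Z μ := by
    have : Z = fun i => (fun j : Fin k => (if j ∈ S then (1:ℝ) else 0) - q) ∘ X i := by
      funext i ω; simp [hZ]
    rw [this]
    exact hindep.comp _ (fun i => measurable_of_countable _)
  set t : ℝ := 2 * ε with ht
  have ht0 : 0 ≤ t := by positivity
  -- the function exp (t * Z i ω) as indicator plus constant
  have hrep : ∀ i, (fun ω => exp (t * Z i ω))
      = fun ω => Set.indicator {ω | X i ω ∈ S}
          (fun _ => exp (t * (1 - q)) - exp (t * (-q))) ω + exp (t * (-q)) := by
    intro i
    funext ω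
    by_cases h : X i ω ∈ S <;> simp [hZ, h, Set.indicator]
  have hAmeas : ∀ i, MeasurableSet {ω | X i ω ∈ S} := fun i =>
    (hXmeas i) (Finset.measurableSet S)
  have hAprob : ∀ i, (μ {ω | X i ω ∈ S}).toReal = q := by
    intro i
    have hA : {ω | X i ω ∈ S} = ⋃ j ∈ S, {ω | X i ω = j} := by
      ext ω; simp
    rw [hA, measure_biUnion_finset ?hd ?hm]
    case hd =>
      intro a ha b hb hab
      simp only [Function.onFun, Set.disjoint_left]
      intro ω h1 h2
      exact hab (by simp only [Set.mem_setOf_eq] at h1 h2; rw [← h1, ← h2])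
    case hm =>
      intro j _
      exact (hXmeas i) (measurableSet_singleton j)
    rw [ENNReal.toReal_sum (fun j _ => measure_ne_top μ _)]
    exact Finset.sum_congr rfl fun j _ => hlaw i j
  have hint : ∀ i, Integrable (fun ω => exp (t * Z i ω)) μ := by
    intro i
    rw [hrep i]
    exact ((integrable_const _).indicator (hAmeas i)).add (integrable_const _)
  have hmgf : ∀ i, mgf (Z i) μ t
      = q * exp (t * (1 - q)) + (1 - q) * exp (t * (-q)) := by
    intro i
    rw [mgf, hrep i,
      integral_add ((integrable_const _).indicator (hAmeas i)) (integrable_const _),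
      integral_indicator_const _ (hAmeas i), integral_const]
    simp only [smul_eq_mul, Measure.real, measure_univ, ENNReal.toReal_one, one_mul, hAprob i]
    ring
  have hintsum : Integrable (fun ω => exp (t * (∑ i, Z i) ω)) μ :=
    hZindep.integrable_exp_mul_sum hZmeas (fun i _ => hint i)
  have hchern := measure_ge_le_exp_mul_mgf (μ := μ) (X := ∑ i, Z i)
    ((n : ℝ) * ε / 2) ht0 hintsum
  have hev : {ω | (n : ℝ) * ε / 2 ≤ (∑ i, Z i) ω}
      = {ω | (n : ℝ) * ε / 2 ≤ ∑ i, ((if X i ω ∈ S then (1:ℝ) else 0) - q)} := by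
    ext ω; simp [hZ]
  rw [hev] at hchern
  refine hchern.trans ?_
  have hprod : mgf (∑ i, Z i) μ t ≤ exp ((n : ℝ) * (t ^ 2 / 8)) := by
    rw [hZindep.mgf_sum hZmeas]
    calc ∏ i : Fin n, mgf (Z i) μ t
        ≤ ∏ _i : Fin n, exp (t ^ 2 / 8) := by
          apply Finset.prod_le_prod (fun i _ => mgf_nonneg)
          intro i _
          rw [hmgf i]
          exact bernoulli_mgf_bound hq0 hq1 t
      _ = exp (t ^ 2 / 8) ^ n := by simp
      _ = exp ((n : ℝ) * (t ^ 2 / 8)) := (Real.exp_nat_mul _ n).symm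
  calc exp (-t * ((n : ℝ) * ε / 2)) * mgf (∑ i, Z i) μ t
      ≤ exp (-t * ((n : ℝ) * ε / 2)) * exp ((n : ℝ) * (t ^ 2 / 8)) :=
        mul_le_mul_of_nonneg_left hprod (exp_pos _).le
    _ = exp (-(n : ℝ) * ε ^ 2 / 2) := by
        rw [← Real.exp_add]
        congr 1
        simp only [ht]
        ring

/-- If `p` is a probability distribution on `Fin k`, `X 0, ..., X (n-1)` are
independent samples drawn from `p`, and `phat ω` is the empirical distribution
(`phat ω j = (1/n) * #{i : X i ω = j}`), then for every `ε > 0` the probability that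
`‖phat - p‖₁ ≥ ε` is at most `2 ^ k * exp (-n * ε ^ 2 / 2)`. -/
theorem empirical_l1_concentration
    {Ω : Type*} [MeasurableSpace Ω] (μ : Measure Ω) [IsProbabilityMeasure μ]
    (k n : ℕ) (p : Fin k → ℝ) (hp0 : ∀ j, 0 ≤ p j) (hp1 : ∑ j, p j = 1)
    (X : Fin n → Ω → Fin k) (hXmeas : ∀ i, Measurable (X i))
    (hindep : iIndepFun X μ)
    (hlaw : ∀ i j, (μ {ω | X i ω = j}).toReal = p j)
    (phat : Ω → Fin k → ℝ)
    (hphat : ∀ ω j, phat ω j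
      = (1 / (n : ℝ)) * (Finset.univ.filter (fun i => X i ω = j)).card)
    (ε : ℝ) (hε : 0 < ε) :
    (μ {ω | ε ≤ ∑ j, |phat ω j - p j|}).toReal
      ≤ 2 ^ k * Real.exp (-(n : ℝ) * ε ^ 2 / 2) := by
  classical
  have hle1 : (μ {ω | ε ≤ ∑ j, |phat ω j - p j|}).toReal ≤ 1 := by
    have h : μ {ω | ε ≤ ∑ j, |phat ω j - p j|} ≤ 1 := by
      rw [← measure_univ (μ := μ)]
      exact measure_mono (Set.subset_univ _)
    calc (μ {ω | ε ≤ ∑ j, |phat ω j - p j|}).toReal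
        ≤ (1 : ℝ≥0∞).toReal := ENNReal.toReal_mono ENNReal.one_ne_top h
      _ = 1 := by simp
  rcases Nat.eq_zero_or_pos n with hn | hn
  · subst hn
    refine hle1.trans ?_
    simp only [Nat.cast_zero, neg_zero, zero_mul, zero_div, Real.exp_zero, mul_one]
    exact one_le_pow₀ (by norm_num)
  -- main case n > 0
  have hnR : (0 : ℝ) < n := by exact_mod_cast hn
  set E : Finset (Fin k) → Set Ω := fun S =>
    {ω | (n : ℝ) * ε / 2
        ≤ ∑ i, ((if X i ω ∈ S then (1:ℝ) else 0) - ∑ j ∈ S, p j)} with hE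
  have hincl : {ω | ε ≤ ∑ j, |phat ω j - p j|} ⊆ ⋃ S : Finset (Fin k), E S := by
    intro ω hω
    simp only [Set.mem_setOf_eq] at hω
    set S : Finset (Fin k) := Finset.univ.filter (fun j => p j ≤ phat ω j) with hS
    refine Set.mem_iUnion.mpr ⟨S, ?_⟩
    -- total empirical mass is 1
    have hcards : ∑ j, ((Finset.univ.filter (fun i => X i ω = j)).card : ℝ) = n := by
      have h := Finset.card_eq_sum_card_fiberwise (f := fun i => X i ω)
        (s := (Finset.univ : Finset (Fin n))) (t := (Finset.univ : Finset (Fin k)))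
        (fun i _ => Finset.mem_univ _)
      rw [Finset.card_univ, Fintype.card_fin] at h
      rw [← Nat.cast_sum, ← h]
    have hsum_phat : ∑ j, phat ω j = 1 := by
      simp only [hphat]
      rw [← Finset.mul_sum, hcards]
      field_simp
    have hzero : ∑ j, (phat ω j - p j) = 0 := by
      rw [Finset.sum_sub_distrib, hsum_phat, hp1]; ring
    have hsplit0 : ∑ j ∈ S, (phat ω j - p j)
        + ∑ j ∈ Finset.univ.filter (fun j => ¬ p j ≤ phat ω j), (phat ω j - p j) = 0 := by
      rw [Finset.sum_filter_add_sum_filter_not]; exact hzero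
    have habs : ∑ j, |phat ω j - p j|
        = ∑ j ∈ S, (phat ω j - p j)
          - ∑ j ∈ Finset.univ.filter (fun j => ¬ p j ≤ phat ω j), (phat ω j - p j) := by
      rw [← Finset.sum_filter_add_sum_filter_not Finset.univ (fun j => p j ≤ phat ω j)
        (fun j => |phat ω j - p j|), sub_eq_add_neg, ← Finset.sum_neg_distrib]
      congr 1
      · exact Finset.sum_congr rfl fun j hj =>
          abs_of_nonneg (sub_nonneg.mpr (Finset.mem_filter.mp hj).2)
      · refine Finset.sum_congr rfl fun j hj => ?_
        have := (Finset.mem_filter.mp hj).2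
        rw [abs_of_neg (by push_neg at this; linarith)]
    have hhalf : ε / 2 ≤ ∑ j ∈ S, (phat ω j - p j) := by
      rw [habs] at hω
      linarith [hsplit0]
    -- count: empirical mass of S
    have hcount : ∑ i, (if X i ω ∈ S then (1:ℝ) else 0)
        = (n : ℝ) * ∑ j ∈ S, phat ω j := by
      rw [Finset.sum_boole]
      have hcard : (Finset.univ.filter (fun i => X i ω ∈ S)).card
          = ∑ j ∈ S, (Finset.univ.filter (fun i => X i ω = j)).card := by
        rw [Finset.card_eq_sum_card_fiberwise
          (f := fun i => X i ω) (s := Finset.univ.filter (fun i => X i ω ∈ S)) (t := S) (fun i hi => (Finset.mem_filter.mp hi).2)]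
        refine Finset.sum_congr rfl fun j hj => ?_
        congr 1
        rw [Finset.filter_filter]
        exact Finset.filter_congr fun i _ => by
          show X i ω ∈ S ∧ X i ω = j ↔ X i ω = j
          exact ⟨fun h => h.2, fun h => ⟨by rw [h]; exact hj, h⟩⟩
      simp only [hphat]
      rw [← Finset.mul_sum]
      have hcardR : ((Finset.univ.filter (fun i => X i ω ∈ S)).card : ℝ)
          = ∑ j ∈ S, ((Finset.univ.filter (fun i => X i ω = j)).card : ℝ) := by
        exact_mod_cast congrArg (Nat.cast : ℕ → ℝ) hcard
      rw [hcardR]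
      rw [← mul_assoc, mul_one_div_cancel hnR.ne', one_mul]
    show (n : ℝ) * ε / 2 ≤ ∑ i, ((if X i ω ∈ S then (1:ℝ) else 0) - ∑ j ∈ S, p j)
    rw [Finset.sum_sub_distrib, Finset.sum_const, Finset.card_univ, Fintype.card_fin,
      hcount, nsmul_eq_mul]
    have : ε / 2 ≤ ∑ j ∈ S, phat ω j - ∑ j ∈ S, p j := by
      rw [← Finset.sum_sub_distrib]; exact hhalf
    nlinarith
  calc (μ {ω | ε ≤ ∑ j, |phat ω j - p j|}).toReal
      ≤ (∑ S : Finset (Fin k), μ (E S)).toReal := by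
        apply ENNReal.toReal_mono
        · exact (ENNReal.sum_lt_top.mpr fun _ _ => measure_lt_top μ _).ne
        · refine (measure_mono hincl).trans ?_
          rw [← tsum_fintype (L := SummationFilter.unconditional _)]
          exact measure_iUnion_le _
    _ = ∑ S : Finset (Fin k), (μ (E S)).toReal :=
        ENNReal.toReal_sum fun _ _ => measure_ne_top μ _
    _ ≤ ∑ _S : Finset (Fin k), Real.exp (-(n : ℝ) * ε ^ 2 / 2) :=
        Finset.sum_le_sum fun S _ =>
          subset_chernoff μ k n p hp0 hp1 X hXmeas hindep hlaw ε hε S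
    _ = 2 ^ k * Real.exp (-(n : ℝ) * ε ^ 2 / 2) := by
        rw [Finset.sum_const, Finset.card_univ, Fintype.card_finset, Fintype.card_fin,
          nsmul_eq_mul]
        push_cast
        ring
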